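/- Let (D, ⊑) be a partial ordering with least element ⊥ and F = {f₁, …, f_k} a finite set of inflationary functions on D. If D is finite, then every sequence of states of the Generic Iteration algorithm GI terminates, i.e., there is no infinite sequence of iterations of the while loop. Formally: there is no infinite sequence (d₀, G₀), (d₁, G₁), … with d₀ = ⊥, G₀ = F, and at each step G_{i+1} = (G_i − {g}) ∪ U_i with U_i = ∅ whenever g(d_i) = d_i, and d_{i+1} = g(d_i), for some chosen g ∈ G_i. -/

import Mathlib

/-- Termination of the Generic Iteration algorithm `GI`: if `D` is a finite
partial ordering with least element `⊥` and `F` is a finite set of inflationary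
functions on `D`, then there is no infinite sequence of states `(dᵢ, Gᵢ)` of
the `GI` algorithm, where at each step some `g ∈ Gᵢ` is chosen, `Gᵢ₊₁` is
obtained by removing `g` and adding a set `Uᵢ ⊆ F` of functions (empty whenever
`g (dᵢ) = dᵢ`, as required by condition B), and `dᵢ₊₁ = g (dᵢ)`. -/
theorem GI_termination {D : Type*} [PartialOrder D] [OrderBot D] [Finite D]
    (F : Set (D → D)) (hF : F.Finite)
    (hinfl : ∀ f ∈ F, ∀ x : D, x ≤ f x) :
    ¬ ∃ (d : ℕ → D) (G : ℕ → Set (D → D)) (g : ℕ → D → D) (U : ℕ → Set (D → D)),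
        d 0 = ⊥ ∧ G 0 = F ∧
        ∀ i : ℕ,
          g i ∈ G i ∧
          U i ⊆ F ∧
          (g i (d i) = d i → U i = ∅) ∧
          G (i + 1) = (G i \ {g i}) ∪ U i ∧
          d (i + 1) = g i (d i) := by
  rintro ⟨d, G, g, U, hd0, hG0, hstep⟩
  -- invariant: G i ⊆ F
  have hGF : ∀ i, G i ⊆ F := by
    intro i
    induction i with
    | zero => rw [hG0]
    | succ n ih =>
      obtain ⟨-, hUF, -, hGn, -⟩ := hstep n
      rw [hGn]
      exact Set.union_subset ((Set.diff_subset).trans ih) hUF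
  -- d is monotone
  have hmono : Monotone d := by
    apply monotone_nat_of_le_succ
    intro n
    obtain ⟨hg, -, -, -, hdn⟩ := hstep n
    rw [hdn]
    exact hinfl _ (hGF n hg) _
  -- d stabilizes
  have hwf : WellFounded ((· > ·) : D → D → Prop) := IsWellFounded.wf
  obtain ⟨N, hN⟩ := wellFoundedGT_iff_monotone_chain_condition.mp ⟨hwf⟩ ⟨d, hmono⟩
  simp only [OrderHom.coe_mk] at hN
  -- from N on, G strictly decreases
  have hdec : ∀ i, N ≤ i → (G (i + 1)).ncard < (G i).ncard := by
    intro i hi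
    obtain ⟨hg, -, hU, hGn, hdn⟩ := hstep i
    have hfix : g i (d i) = d i := by
      rw [← hdn, ← hN i hi, ← hN (i + 1) (hi.trans (Nat.le_succ i))]
    rw [hGn, hU hfix, Set.union_empty]
    exact Set.ncard_diff_singleton_lt_of_mem hg (hF.subset (hGF i))
  have key : ∀ k, (G (N + k)).ncard + k ≤ (G N).ncard := by
    intro k
    induction k with
    | zero => simp
    | succ n ih =>
      have := hdec (N + n) (Nat.le_add_right N n)
      have he : N + (n + 1) = N + n + 1 := rfl
      rw [he]
      omega
  have := key ((G N).ncard + 1)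
  omega
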